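/- Let g, h : 2^E → ℝ≥0 be monotone and submodular. Then there exists an ordering π = (e_1, …, e_n) of E such that for every k ∈ {1, …, n} and every S ⊆ E with |S| = k, (1 + e/(e − 1))·f(S_k) ≥ f(S). -/

import Mathlib

namespace IncDec

open Finset

variable {α : Type*} [Fintype α] [DecidableEq α]

/-- Marginal gain `F(x | S) = F(S ∪ {x}) - F(S)`. -/
def marg (F : Finset α → ℝ) (x : α) (S : Finset α) : ℝ := F (insert x S) - F S

/-- Marginal gain of a set: `F(T | S) = F(T ∪ S) - F(S)`. -/
def margSet (F : Finset α → ℝ) (T S : Finset α) : ℝ := F (T ∪ S) - F S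

/-- Monotone set function. -/
def Mono (F : Finset α → ℝ) : Prop := ∀ ⦃S T : Finset α⦄, S ⊆ T → F S ≤ F T

/-- Nonnegative set function. -/
def Nonneg (F : Finset α → ℝ) : Prop := ∀ S : Finset α, 0 ≤ F S

/-- The combined objective `f(S) = h(S) + g(E \ S)`. -/
def fObj (g h : Finset α → ℝ) (S : Finset α) : ℝ := h S + g Sᶜ

/-- `F` has generic submodularity ratio at least `γ`. -/
def GenSubRatioGE (F : Finset α → ℝ) (γ : ℝ) : Prop :=
  ∀ A B : Finset α, ∀ e : α, marg F e A ≥ γ * marg F e (A ∪ B)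

/-- `F` has curvature at most `c`. -/
def CurvatureLE (F : Finset α → ℝ) (c : ℝ) : Prop :=
  ∀ A B : Finset α, ∀ e : α, e ∉ B → marg F e (A ∪ B) ≥ (1 - c) * marg F e A

/-- Submodular set function. -/
def Submodular (F : Finset α → ℝ) : Prop :=
  ∀ ⦃S T : Finset α⦄, S ⊆ T → ∀ e : α, e ∉ T → marg F e T ≤ marg F e S

/-- Modular set function. -/
def Modular (F : Finset α → ℝ) : Prop := ∀ S : Finset α, F S = ∑ e ∈ S, F {e}

/-- Gross substitute set function. -/
def GrossSubstitute (F : Finset α → ℝ) : Prop :=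
  Submodular F ∧
    ∀ A B : Finset α, Disjoint A B → 2 ≤ B.card → ∀ b ∈ B,
      ∃ b' ∈ B.erase b,
        marg F b A + margSet F (B.erase b) A ≤ marg F b' A + margSet F (B.erase b') A

/-- The set of ratios appearing in the definition of the curvature. -/
def curvRatioSet (F : Finset α → ℝ) : Set ℝ :=
  {r | ∃ A B : Finset α, ∃ e : α, e ∉ B ∧ 0 < marg F e A ∧ r = marg F e (A ∪ B) / marg F e A}

/-- `F` has curvature exactly `c` (with `min ∅ := 1`, i.e. `c = 0` if the ratio set is empty). -/
def CurvatureEq (F : Finset α → ℝ) (c : ℝ) : Prop :=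
  (¬ (curvRatioSet F).Nonempty ∧ c = 0) ∨ IsLeast (curvRatioSet F) (1 - c)

/-- The set of ratios appearing in the definition of the generic submodularity ratio. -/
def gsRatioSet (F : Finset α → ℝ) : Set ℝ :=
  {r | ∃ A B : Finset α, ∃ e : α, 0 < marg F e (A ∪ B) ∧ r = marg F e A / marg F e (A ∪ B)}

/-- `F` has generic submodularity ratio exactly `γ` (with `min ∅ := 1`). -/
def GenSubRatioEq (F : Finset α → ℝ) (γ : ℝ) : Prop :=
  (¬ (gsRatioSet F).Nonempty ∧ γ = 1) ∨ IsLeast (gsRatioSet F) γ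

/-- The singleton-based ratio set `{F(e | E \ {e}) / F({e}) : e ∈ E, F({e}) > 0}`. -/
def curvSingletonSet (F : Finset α → ℝ) : Set ℝ :=
  {r | ∃ e : α, 0 < F {e} ∧ r = marg F e ({e}ᶜ) / F {e}}

/-- A run of the double-greedy algorithm for `g` and `h`: distinct elements `elt 0, …,
`elt (n-1)` enumerating `E` (`elt i` is the element `e*_{i+1}` of the paper), together with the
sets `H i`, `G i` (for `0 ≤ i ≤ n`), each new element maximizing the larger marginal gain and
being added to the side realizing it. -/
structure DGRun (α : Type*) [Fintype α] [DecidableEq α] (g h : Finset α → ℝ) where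
  elt : ℕ → α
  H : ℕ → Finset α
  G : ℕ → Finset α
  H0 : H 0 = ∅
  G0 : G 0 = ∅
  mem : ∀ i < Fintype.card α, elt i ∉ H i ∪ G i
  distinct : ∀ i < Fintype.card α, ∀ j < Fintype.card α, elt i = elt j → i = j
  enum : ∀ x : α, ∃ i < Fintype.card α, elt i = x
  greedy : ∀ i < Fintype.card α, ∀ x : α, x ∉ H i ∪ G i →
      max (marg g x (G i)) (marg h x (H i)) ≤ max (marg g (elt i) (G i)) (marg h (elt i) (H i))
  step : ∀ i < Fintype.card α,
      (H (i + 1) = insert (elt i) (H i) ∧ G (i + 1) = G i ∧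
        marg g (elt i) (G i) ≤ marg h (elt i) (H i)) ∨
      (G (i + 1) = insert (elt i) (G i) ∧ H (i + 1) = H i ∧
        marg h (elt i) (H i) ≤ marg g (elt i) (G i))

/-- `phi R i` is the increment `φ_{i+1}` of the double-greedy run `R`. -/
def phi {g h : Finset α → ℝ} (R : DGRun α g h) (i : ℕ) : ℝ :=
  max (marg g (R.elt i) (R.G i)) (marg h (R.elt i) (R.H i))


/-! ### Auxiliary development for `stmt1` -/

section AuxAnalytic

omit [Fintype α] in
lemma marg_nonneg {F : Finset α → ℝ} (hF : Mono F) (x : α) (S : Finset α) :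
    0 ≤ marg F x S := sub_nonneg.2 (hF (Finset.subset_insert _ _))

omit [Fintype α] in
lemma expand {F : Finset α → ℝ} (hs : Submodular F) :
    ∀ (s T : Finset α), Disjoint s T → F (s ∪ T) ≤ F T + ∑ e ∈ s, marg F e T := by
  intro s
  induction s using Finset.induction_on with
  | empty => simp
  | @insert x s hx ih =>
    intro T hd
    have hdT : Disjoint s T := hd.mono_left (Finset.subset_insert _ _)
    have hxT : x ∉ T := Finset.disjoint_left.1 hd (Finset.mem_insert_self _ _)
    have hxsT : x ∉ s ∪ T := by simp [hx, hxT]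
    have h1 : insert x s ∪ T = insert x (s ∪ T) := by
      ext y; simp [or_assoc]
    calc F (insert x s ∪ T) = marg F x (s ∪ T) + F (s ∪ T) := by
            rw [h1]; unfold marg; ring
      _ ≤ marg F x T + (F T + ∑ e ∈ s, marg F e T) :=
            add_le_add (hs Finset.subset_union_right x hxsT) (ih T hdT)
      _ = F T + ∑ e ∈ insert x s, marg F e T := by
            rw [Finset.sum_insert hx]; ring

omit [Fintype α] in
lemma bound_by_margs {F : Finset α → ℝ} (hm : Mono F) (hs : Submodular F)
    (O T : Finset α) : F O ≤ F T + ∑ e ∈ O \ T, marg F e T := by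
  have h1 : F O ≤ F ((O \ T) ∪ T) := by
    apply hm; rw [Finset.sdiff_union_self_eq_union]; exact Finset.subset_union_left
  exact h1.trans (expand hs _ _ Finset.sdiff_disjoint)

lemma greedy_rec (k : ℕ) (hk : 1 ≤ k) (v : ℕ → ℝ) (c : ℝ)
    (hv0 : 0 ≤ v 0) (hvk : 0 ≤ v k)
    (hstep : ∀ i < k, c - v i ≤ k * (v (i+1) - v i)) :
    c ≤ Real.exp 1 / (Real.exp 1 - 1) * v k := by
  have hE : (1:ℝ) < Real.exp 1 := by
    have := Real.add_one_le_exp (1:ℝ); linarith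
  have hE0 : (0:ℝ) < Real.exp 1 := by linarith
  have hkR : (0:ℝ) < (k:ℝ) := by exact_mod_cast Nat.pos_of_ne_zero (by omega)
  set q : ℝ := 1 - 1/(k:ℝ) with hq
  have hq0 : 0 ≤ q := by
    have h1 : 1/(k:ℝ) ≤ 1 := by
      rw [div_le_one hkR]; exact_mod_cast hk
    rw [hq]; linarith
  have key : ∀ i, i ≤ k → c - v i ≤ q^i * max c 0 := by
    intro i
    induction i with
    | zero =>
      intro _
      simpa using le_trans (by linarith : c - v 0 ≤ c) (le_max_left c 0)
    | succ i ih =>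
      intro hik
      have hik' : i < k := lt_of_lt_of_le (Nat.lt_succ_self i) hik
      have h1 := hstep i hik'
      have hdiv : (c - v i)/(k:ℝ) ≤ v (i+1) - v i := by
        rw [div_le_iff₀ hkR]; linarith
      have hexp : q * (c - v i) = (c - v i) - (c - v i) / (k:ℝ) := by
        rw [hq]; ring
      have h2 : c - v (i+1) ≤ q * (c - v i) := by
        rw [hexp]; linarith
      calc c - v (i+1) ≤ q * (c - v i) := h2
        _ ≤ q * (q^i * max c 0) :=
            mul_le_mul_of_nonneg_left (ih hik'.le) hq0
        _ = q^(i+1) * max c 0 := by ring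
  have hqe : q ^ k ≤ 1/Real.exp 1 := by
    have h1 : q ≤ Real.exp (-(1/(k:ℝ))) := by
      have := Real.add_one_le_exp (-(1/(k:ℝ))); linarith
    have h2 : q ^ k ≤ Real.exp (-(1/(k:ℝ))) ^ k := pow_le_pow_left₀ hq0 h1 k
    have h3 : Real.exp (-(1/(k:ℝ))) ^ k = Real.exp (-1) := by
      rw [← Real.exp_nat_mul]
      congr 1
      field_simp
    rw [h3, Real.exp_neg] at h2
    rw [one_div]
    exact h2
  have hM : 0 ≤ max c 0 := le_max_right _ _
  have hfin : c - v k ≤ (1/Real.exp 1) * max c 0 :=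
    (key k le_rfl).trans (mul_le_mul_of_nonneg_right hqe hM)
  by_cases hc : c ≤ 0
  · have hr : 0 ≤ Real.exp 1 / (Real.exp 1 - 1) := div_nonneg hE0.le (by linarith)
    have := mul_nonneg hr hvk
    linarith
  · push_neg at hc
    rw [max_eq_left hc.le] at hfin
    rw [div_mul_eq_mul_div, le_div_iff₀ (by linarith : (0:ℝ) < Real.exp 1 - 1)]
    have h3 : (c - v k) * Real.exp 1 ≤ ((1/Real.exp 1) * c) * Real.exp 1 :=
      mul_le_mul_of_nonneg_right hfin hE0.le
    have h4 : ((1/Real.exp 1) * c) * Real.exp 1 = c := by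
      field_simp
    nlinarith

end AuxAnalytic

section Constr

variable (g h : Finset α → ℝ) [Nonempty α]

noncomputable def pick (H G : Finset α) : α :=
  if hne : ((H ∪ G)ᶜ : Finset α).Nonempty then
    (Finset.exists_max_image ((H ∪ G)ᶜ) (fun x => max (marg g x G) (marg h x H)) hne).choose
  else Classical.arbitrary α

lemma pick_spec (H G : Finset α) (hne : ((H ∪ G)ᶜ : Finset α).Nonempty) :
    pick g h H G ∈ (H ∪ G)ᶜ ∧ ∀ x ∈ (H ∪ G)ᶜ,
      max (marg g x G) (marg h x H) ≤ max (marg g (pick g h H G) G) (marg h (pick g h H G) H) := by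
  have hs := (Finset.exists_max_image ((H ∪ G)ᶜ) (fun x => max (marg g x G) (marg h x H)) hne).choose_spec
  rw [pick, dif_pos hne]
  exact hs

noncomputable def st : ℕ → Finset α × Finset α
  | 0 => (∅, ∅)
  | i + 1 =>
    let p := st i
    let x := pick g h p.1 p.2
    if marg g x p.2 ≤ marg h x p.1 then (insert x p.1, p.2) else (p.1, insert x p.2)

noncomputable def Hst (i : ℕ) : Finset α := (st g h i).1
noncomputable def Gst (i : ℕ) : Finset α := (st g h i).2
noncomputable def el (i : ℕ) : α := pick g h (Hst g h i) (Gst g h i)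
def isH (i : ℕ) : Prop := marg g (el g h i) (Gst g h i) ≤ marg h (el g h i) (Hst g h i)
noncomputable def phiI (i : ℕ) : ℝ :=
  max (marg g (el g h i) (Gst g h i)) (marg h (el g h i) (Hst g h i))

noncomputable instance : DecidablePred (isH g h) := fun _ => by
  unfold isH; infer_instance

lemma Hst_zero : Hst g h 0 = ∅ := rfl
lemma Gst_zero : Gst g h 0 = ∅ := rfl

lemma st_succ (i : ℕ) : st g h (i+1) =
    if isH g h i then (insert (el g h i) (Hst g h i), Gst g h i)
    else (Hst g h i, insert (el g h i) (Gst g h i)) := by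
  by_cases hi : isH g h i
  · rw [if_pos hi]; exact if_pos hi
  · rw [if_neg hi]; exact if_neg hi

lemma Hst_succ (i : ℕ) : Hst g h (i+1) =
    if isH g h i then insert (el g h i) (Hst g h i) else Hst g h i := by
  rw [Hst, st_succ]; split <;> rfl

lemma Gst_succ (i : ℕ) : Gst g h (i+1) =
    if isH g h i then Gst g h i else insert (el g h i) (Gst g h i) := by
  rw [Gst, st_succ]; split <;> rfl

noncomputable def stL : ℕ → List α × List α
  | 0 => ([], [])
  | i + 1 =>
    let p := stL i
    if isH g h i then (p.1 ++ [el g h i], p.2) else (p.1, el g h i :: p.2)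

lemma stL_succ (i : ℕ) : stL g h (i+1) =
    if isH g h i then ((stL g h i).1 ++ [el g h i], (stL g h i).2)
    else ((stL g h i).1, el g h i :: (stL g h i).2) := rfl

lemma inv : ∀ i, i ≤ Fintype.card α →
    Disjoint (Hst g h i) (Gst g h i) ∧ (Hst g h i ∪ Gst g h i).card = i ∧
    (stL g h i).1.toFinset = Hst g h i ∧ (stL g h i).2.toFinset = Gst g h i ∧
    ((stL g h i).1 ++ (stL g h i).2).Nodup ∧
    (stL g h i).1.length + (stL g h i).2.length = i := by
  intro i
  induction i with
  | zero => intro _; refine ⟨by simp [Hst_zero, Gst_zero], ?_, ?_, ?_, ?_, ?_⟩ <;>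
      simp [Hst_zero, Gst_zero, stL]
  | succ i ih =>
    intro hi1
    obtain ⟨hd, hcard, htf1, htf2, hnd, hlen⟩ := ih (Nat.le_of_succ_le hi1)
    have hilt : i < Fintype.card α := hi1
    have hne : ((Hst g h i ∪ Gst g h i)ᶜ : Finset α).Nonempty := by
      rw [← Finset.card_pos, Finset.card_compl, hcard]
      omega
    have helc := (pick_spec g h _ _ hne).1
    have helm : el g h i ∉ Hst g h i ∪ Gst g h i := Finset.mem_compl.1 helc
    have helH : el g h i ∉ Hst g h i := fun hx => helm (Finset.mem_union_left _ hx)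
    have helG : el g h i ∉ Gst g h i := fun hx => helm (Finset.mem_union_right _ hx)
    have helL1 : el g h i ∉ (stL g h i).1 := by
      rw [← List.mem_toFinset, htf1]; exact helH
    have helL2 : el g h i ∉ (stL g h i).2 := by
      rw [← List.mem_toFinset, htf2]; exact helG
    by_cases hH : isH g h i
    · rw [Hst_succ, Gst_succ, stL_succ, if_pos hH, if_pos hH, if_pos hH]
      refine ⟨?_, ?_, ?_, ?_, ?_, ?_⟩
      · rw [Finset.disjoint_insert_left]; exact ⟨helG, hd⟩
      · rw [Finset.insert_union, Finset.card_insert_of_notMem helm, hcard]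
      · simp only [List.toFinset_append, List.toFinset_cons, List.toFinset_nil, htf1]; rw [Finset.union_comm]; ext y; simp
      · exact htf2
      · rw [List.append_assoc]
        show ((stL g h i).1 ++ el g h i :: (stL g h i).2).Nodup
        rw [List.Perm.nodup_iff List.perm_middle]
        exact List.nodup_cons.2 ⟨by simp [List.mem_append, helL1, helL2], hnd⟩
      · simp only [List.length_append, List.length_cons, List.length_nil]
        omega
    · rw [Hst_succ, Gst_succ, stL_succ, if_neg hH, if_neg hH, if_neg hH]
      refine ⟨?_, ?_, ?_, ?_, ?_, ?_⟩
      · rw [Finset.disjoint_insert_right]; exact ⟨helH, hd⟩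
      · rw [Finset.union_insert, Finset.card_insert_of_notMem helm, hcard]
      · exact htf1
      · rw [List.toFinset_cons, htf2]
      · show ((stL g h i).1 ++ el g h i :: (stL g h i).2).Nodup
        rw [List.Perm.nodup_iff List.perm_middle]
        exact List.nodup_cons.2 ⟨by simp [List.mem_append, helL1, helL2], hnd⟩
      · simp only [List.length_append, List.length_cons]
        omega

lemma disjHG {i : ℕ} (hi : i ≤ Fintype.card α) : Disjoint (Hst g h i) (Gst g h i) :=
  (inv g h i hi).1

lemma cardHG {i : ℕ} (hi : i ≤ Fintype.card α) : (Hst g h i ∪ Gst g h i).card = i :=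
  (inv g h i hi).2.1

lemma toFinset_stL1 {i : ℕ} (hi : i ≤ Fintype.card α) : (stL g h i).1.toFinset = Hst g h i :=
  (inv g h i hi).2.2.1

lemma toFinset_stL2 {i : ℕ} (hi : i ≤ Fintype.card α) : (stL g h i).2.toFinset = Gst g h i :=
  (inv g h i hi).2.2.2.1

lemma nodup_stL {i : ℕ} (hi : i ≤ Fintype.card α) : ((stL g h i).1 ++ (stL g h i).2).Nodup :=
  (inv g h i hi).2.2.2.2.1

lemma len_stL {i : ℕ} (hi : i ≤ Fintype.card α) :
    (stL g h i).1.length + (stL g h i).2.length = i :=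
  (inv g h i hi).2.2.2.2.2

lemma compl_ne {i : ℕ} (hi : i < Fintype.card α) :
    ((Hst g h i ∪ Gst g h i)ᶜ : Finset α).Nonempty := by
  rw [← Finset.card_pos, Finset.card_compl, cardHG g h hi.le]
  omega

lemma el_not_mem {i : ℕ} (hi : i < Fintype.card α) : el g h i ∉ Hst g h i ∪ Gst g h i :=
  Finset.mem_compl.1 ((pick_spec g h _ _ (compl_ne g h hi)).1)

lemma greedy_le {i : ℕ} (hi : i < Fintype.card α) {x : α} (hx : x ∉ Hst g h i ∪ Gst g h i) :
    max (marg g x (Gst g h i)) (marg h x (Hst g h i)) ≤ phiI g h i :=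
  (pick_spec g h _ _ (compl_ne g h hi)).2 x (Finset.mem_compl.2 hx)

lemma Hst_mono : ∀ {i j : ℕ}, i ≤ j → Hst g h i ⊆ Hst g h j := by
  intro i j hij
  induction j, hij using Nat.le_induction with
  | base => exact subset_rfl
  | succ j hij ih =>
    refine ih.trans ?_
    rw [Hst_succ]
    split
    · exact Finset.subset_insert _ _
    · exact subset_rfl

lemma Gst_mono : ∀ {i j : ℕ}, i ≤ j → Gst g h i ⊆ Gst g h j := by
  intro i j hij
  induction j, hij using Nat.le_induction with
  | base => exact subset_rfl
  | succ j hij ih =>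
    refine ih.trans ?_
    rw [Gst_succ]
    split
    · exact subset_rfl
    · exact Finset.subset_insert _ _

lemma mem_Hst_iff : ∀ (i : ℕ) (x : α),
    x ∈ Hst g h i ↔ ∃ j, j < i ∧ isH g h j ∧ el g h j = x := by
  intro i
  induction i with
  | zero => intro x; simp [Hst_zero]
  | succ i ih =>
    intro x
    rw [Hst_succ]
    by_cases hH : isH g h i
    · rw [if_pos hH, Finset.mem_insert]
      constructor
      · rintro (rfl | hx)
        · exact ⟨i, Nat.lt_succ_self i, hH, rfl⟩
        · obtain ⟨j, hj, hjH, hje⟩ := (ih x).1 hx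
          exact ⟨j, Nat.lt_succ_of_lt hj, hjH, hje⟩
      · rintro ⟨j, hj, hjH, rfl⟩
        rcases Nat.lt_succ_iff_lt_or_eq.1 hj with hj' | rfl
        · exact Or.inr ((ih _).2 ⟨j, hj', hjH, rfl⟩)
        · exact Or.inl rfl
    · rw [if_neg hH, ih x]
      constructor
      · rintro ⟨j, hj, hjH, rfl⟩
        exact ⟨j, Nat.lt_succ_of_lt hj, hjH, rfl⟩
      · rintro ⟨j, hj, hjH, rfl⟩
        rcases Nat.lt_succ_iff_lt_or_eq.1 hj with hj' | rfl
        · exact ⟨j, hj', hjH, rfl⟩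
        · exact absurd hjH hH

lemma mem_Gst_iff : ∀ (i : ℕ) (x : α),
    x ∈ Gst g h i ↔ ∃ j, j < i ∧ ¬ isH g h j ∧ el g h j = x := by
  intro i
  induction i with
  | zero => intro x; simp [Gst_zero]
  | succ i ih =>
    intro x
    rw [Gst_succ]
    by_cases hH : isH g h i
    · rw [if_pos hH, ih x]
      constructor
      · rintro ⟨j, hj, hjH, rfl⟩
        exact ⟨j, Nat.lt_succ_of_lt hj, hjH, rfl⟩
      · rintro ⟨j, hj, hjH, rfl⟩
        rcases Nat.lt_succ_iff_lt_or_eq.1 hj with hj' | rfl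
        · exact ⟨j, hj', hjH, rfl⟩
        · exact absurd hH hjH
    · rw [if_neg hH, Finset.mem_insert]
      constructor
      · rintro (rfl | hx)
        · exact ⟨i, Nat.lt_succ_self i, hH, rfl⟩
        · obtain ⟨j, hj, hjH, hje⟩ := (ih x).1 hx
          exact ⟨j, Nat.lt_succ_of_lt hj, hjH, hje⟩
      · rintro ⟨j, hj, hjH, rfl⟩
        rcases Nat.lt_succ_iff_lt_or_eq.1 hj with hj' | rfl
        · exact Or.inr ((ih _).2 ⟨j, hj', hjH, rfl⟩)
        · exact Or.inl rfl

lemma el_mem_succ (i : ℕ) : el g h i ∈ Hst g h (i+1) ∪ Gst g h (i+1) := by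
  rw [Hst_succ, Gst_succ]
  by_cases hH : isH g h i
  · rw [if_pos hH, if_pos hH]
    exact Finset.mem_union_left _ (Finset.mem_insert_self _ _)
  · rw [if_neg hH, if_neg hH]
    exact Finset.mem_union_right _ (Finset.mem_insert_self _ _)

lemma el_inj {i j : ℕ} (hi : i < Fintype.card α) (hj : j < Fintype.card α)
    (hij : el g h i = el g h j) : i = j := by
  by_contra hne
  rcases Nat.lt_or_ge i j with hlt | hge
  · have h1 : el g h i ∈ Hst g h j ∪ Gst g h j := by
      refine Finset.mem_union.2 ?_
      rcases Finset.mem_union.1 (el_mem_succ g h i) with hx | hx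
      · exact Or.inl (Hst_mono g h hlt hx)
      · exact Or.inr (Gst_mono g h hlt hx)
    rw [hij] at h1
    exact el_not_mem g h hj h1
  · have hlt : j < i := by omega
    have h1 : el g h j ∈ Hst g h i ∪ Gst g h i := by
      refine Finset.mem_union.2 ?_
      rcases Finset.mem_union.1 (el_mem_succ g h j) with hx | hx
      · exact Or.inl (Hst_mono g h hlt hx)
      · exact Or.inr (Gst_mono g h hlt hx)
    rw [← hij] at h1
    exact el_not_mem g h hi h1

lemma HG_univ : Hst g h (Fintype.card α) ∪ Gst g h (Fintype.card α) = Finset.univ :=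
  Finset.eq_univ_of_card _ (cardHG g h le_rfl)

lemma exists_el (x : α) : ∃ j, j < Fintype.card α ∧ el g h j = x := by
  have hx : x ∈ Hst g h (Fintype.card α) ∪ Gst g h (Fintype.card α) := by
    rw [HG_univ]; exact Finset.mem_univ x
  rcases Finset.mem_union.1 hx with hx | hx
  · obtain ⟨j, hj, _, hje⟩ := (mem_Hst_iff g h _ x).1 hx
    exact ⟨j, hj, hje⟩
  · obtain ⟨j, hj, _, hje⟩ := (mem_Gst_iff g h _ x).1 hx
    exact ⟨j, hj, hje⟩

noncomputable def idx (x : α) : ℕ := (exists_el g h x).choose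

lemma idx_lt (x : α) : idx g h x < Fintype.card α := (exists_el g h x).choose_spec.1

lemma el_idx (x : α) : el g h (idx g h x) = x := (exists_el g h x).choose_spec.2

lemma idx_el {i : ℕ} (hi : i < Fintype.card α) : idx g h (el g h i) = i :=
  el_inj g h (idx_lt g h _) hi (el_idx g h _)

lemma mem_Hst_data {i : ℕ} (hi : i ≤ Fintype.card α) {x : α} (hx : x ∈ Hst g h i) :
    idx g h x < i ∧ isH g h (idx g h x) := by
  obtain ⟨j, hj, hjH, hje⟩ := (mem_Hst_iff g h i x).1 hx
  have hjn : j < Fintype.card α := lt_of_lt_of_le hj hi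
  have : j = idx g h x := el_inj g h hjn (idx_lt g h x) (by rw [hje, el_idx])
  subst this
  exact ⟨hj, hjH⟩

lemma mem_Gst_data {i : ℕ} (hi : i ≤ Fintype.card α) {x : α} (hx : x ∈ Gst g h i) :
    idx g h x < i ∧ ¬ isH g h (idx g h x) := by
  obtain ⟨j, hj, hjH, hje⟩ := (mem_Gst_iff g h i x).1 hx
  have hjn : j < Fintype.card α := lt_of_lt_of_le hj hi
  have : j = idx g h x := el_inj g h hjn (idx_lt g h x) (by rw [hje, el_idx])
  subst this
  exact ⟨hj, hjH⟩

noncomputable def phiIdx (x : α) : ℝ := phiI g h (idx g h x)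

lemma phiI_nonneg (hhm : Mono h) (i : ℕ) : 0 ≤ phiI g h i :=
  le_trans (marg_nonneg hhm _ _) (le_max_right _ _)

lemma phiIdx_nonneg (hhm : Mono h) (x : α) : 0 ≤ phiIdx g h x :=
  phiI_nonneg g h hhm _

lemma phiI_eq_of_isH {i : ℕ} (hH : isH g h i) :
    phiI g h i = marg h (el g h i) (Hst g h i) := max_eq_right hH

lemma phiI_eq_of_not_isH {i : ℕ} (hH : ¬ isH g h i) :
    phiI g h i = marg g (el g h i) (Gst g h i) :=
  max_eq_left (le_of_lt (lt_of_not_ge hH))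

lemma sum_phi_Hst : ∀ i, i ≤ Fintype.card α →
    ∑ e ∈ Hst g h i, phiIdx g h e = h (Hst g h i) - h ∅ := by
  intro i
  induction i with
  | zero => simp [Hst_zero]
  | succ i ih =>
    intro hi1
    have hilt : i < Fintype.card α := hi1
    have hmem := el_not_mem g h hilt
    have hH' : el g h i ∉ Hst g h i := fun hx => hmem (Finset.mem_union_left _ hx)
    have hidx : idx g h (el g h i) = i := idx_el g h hilt
    rw [Hst_succ]
    by_cases hH : isH g h i
    · rw [if_pos hH, Finset.sum_insert hH']
      rw [ih hilt.le]
      have h1 : phiIdx g h (el g h i) = marg h (el g h i) (Hst g h i) := by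
        rw [phiIdx, hidx, phiI_eq_of_isH g h hH]
      rw [h1, marg]
      ring
    · rw [if_neg hH]
      exact ih hilt.le

lemma sum_phi_Gst : ∀ i, i ≤ Fintype.card α →
    ∑ e ∈ Gst g h i, phiIdx g h e = g (Gst g h i) - g ∅ := by
  intro i
  induction i with
  | zero => simp [Gst_zero]
  | succ i ih =>
    intro hi1
    have hilt : i < Fintype.card α := hi1
    have hmem := el_not_mem g h hilt
    have hG' : el g h i ∉ Gst g h i := fun hx => hmem (Finset.mem_union_right _ hx)
    have hidx : idx g h (el g h i) = i := idx_el g h hilt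
    rw [Gst_succ]
    by_cases hH : isH g h i
    · rw [if_pos hH]
      exact ih hilt.le
    · rw [if_neg hH, Finset.sum_insert hG']
      rw [ih hilt.le]
      have h1 : phiIdx g h (el g h i) = marg g (el g h i) (Gst g h i) := by
        rw [phiIdx, hidx, phiI_eq_of_not_isH g h hH]
      rw [h1, marg]
      ring

noncomputable def cnt (t : ℕ) : ℕ := (stL g h t).1.length
noncomputable def cntG (t : ℕ) : ℕ := (stL g h t).2.length

lemma cnt_zero : cnt g h 0 = 0 := rfl
lemma cntG_zero : cntG g h 0 = 0 := rfl

lemma cnt_succ (t : ℕ) : cnt g h (t+1) = if isH g h t then cnt g h t + 1 else cnt g h t := by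
  rw [cnt, stL_succ]
  split <;> simp [cnt]

lemma cntG_succ (t : ℕ) : cntG g h (t+1) = if isH g h t then cntG g h t else cntG g h t + 1 := by
  rw [cntG, stL_succ]
  split <;> simp [cntG]

lemma cnt_mono : ∀ {i j : ℕ}, i ≤ j → cnt g h i ≤ cnt g h j := by
  intro i j hij
  induction j, hij using Nat.le_induction with
  | base => exact le_rfl
  | succ j hij ih =>
    refine ih.trans ?_
    rw [cnt_succ]
    split <;> omega

lemma cntG_mono : ∀ {i j : ℕ}, i ≤ j → cntG g h i ≤ cntG g h j := by
  intro i j hij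
  induction j, hij using Nat.le_induction with
  | base => exact le_rfl
  | succ j hij ih =>
    refine ih.trans ?_
    rw [cntG_succ]
    split <;> omega

lemma Hst_eq_of_cnt_eq' : ∀ (t d : ℕ), cnt g h t = cnt g h (t+d) → Hst g h t = Hst g h (t+d) := by
  intro t d
  induction d with
  | zero => intro _; rfl
  | succ d ih =>
    intro hc
    rw [show t + (d+1) = t+d+1 from rfl] at hc
    have h1 : cnt g h t ≤ cnt g h (t+d) := cnt_mono g h (by omega)
    have h2 : cnt g h (t+d) ≤ cnt g h (t+d+1) := cnt_mono g h (by omega)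
    have h3 := cnt_succ g h (t+d)
    have hH : ¬ isH g h (t+d) := by
      intro hH
      rw [if_pos hH] at h3
      omega
    have : Hst g h (t+d+1) = Hst g h (t+d) := by
      rw [Hst_succ, if_neg hH]
    rw [show t + (d+1) = t+d+1 from rfl, this]
    exact ih (by omega)

lemma Hst_eq_of_cnt_eq {t t' : ℕ} (hc : cnt g h t = cnt g h t') : Hst g h t = Hst g h t' := by
  rcases le_total t t' with hle | hle
  · obtain ⟨d, rfl⟩ := Nat.exists_eq_add_of_le hle
    exact Hst_eq_of_cnt_eq' g h t d hc
  · obtain ⟨d, rfl⟩ := Nat.exists_eq_add_of_le hle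
    exact (Hst_eq_of_cnt_eq' g h t' d hc.symm).symm

lemma Gst_eq_of_cntG_eq' : ∀ (t d : ℕ), cntG g h t = cntG g h (t+d) → Gst g h t = Gst g h (t+d) := by
  intro t d
  induction d with
  | zero => intro _; rfl
  | succ d ih =>
    intro hc
    rw [show t + (d+1) = t+d+1 from rfl] at hc
    have h1 : cntG g h t ≤ cntG g h (t+d) := cntG_mono g h (by omega)
    have h2 : cntG g h (t+d) ≤ cntG g h (t+d+1) := cntG_mono g h (by omega)
    have h3 := cntG_succ g h (t+d)
    have hH : isH g h (t+d) := by
      by_contra hH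
      rw [if_neg hH] at h3
      omega
    have : Gst g h (t+d+1) = Gst g h (t+d) := by
      rw [Gst_succ, if_pos hH]
    rw [show t + (d+1) = t+d+1 from rfl, this]
    exact ih (by omega)

lemma Gst_eq_of_cntG_eq {t t' : ℕ} (hc : cntG g h t = cntG g h t') : Gst g h t = Gst g h t' := by
  rcases le_total t t' with hle | hle
  · obtain ⟨d, rfl⟩ := Nat.exists_eq_add_of_le hle
    exact Gst_eq_of_cntG_eq' g h t d hc
  · obtain ⟨d, rfl⟩ := Nat.exists_eq_add_of_le hle
    exact (Gst_eq_of_cntG_eq' g h t' d hc.symm).symm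

lemma exists_isH_step : ∀ (N i : ℕ), i < cnt g h N →
    ∃ t, t < N ∧ isH g h t ∧ cnt g h t = i := by
  intro N
  induction N with
  | zero => intro i hi; rw [cnt_zero] at hi; omega
  | succ N ih =>
    intro i hi
    by_cases hiN : i < cnt g h N
    · obtain ⟨t, ht, htH, htc⟩ := ih i hiN
      exact ⟨t, by omega, htH, htc⟩
    · have h3 := cnt_succ g h N
      by_cases hH : isH g h N
      · rw [if_pos hH] at h3
        refine ⟨N, by omega, hH, by omega⟩
      · rw [if_neg hH] at h3
        omega

lemma exists_isG_step : ∀ (N i : ℕ), i < cntG g h N →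
    ∃ t, t < N ∧ ¬ isH g h t ∧ cntG g h t = i := by
  intro N
  induction N with
  | zero => intro i hi; rw [cntG_zero] at hi; omega
  | succ N ih =>
    intro i hi
    by_cases hiN : i < cntG g h N
    · obtain ⟨t, ht, htH, htc⟩ := ih i hiN
      exact ⟨t, by omega, htH, htc⟩
    · have h3 := cntG_succ g h N
      by_cases hH : isH g h N
      · rw [if_pos hH] at h3
        omega
      · rw [if_neg hH] at h3
        refine ⟨N, by omega, hH, by omega⟩

lemma exists_cnt (N i : ℕ) (hi : i ≤ cnt g h N) : ∃ t, t ≤ N ∧ cnt g h t = i := by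
  rcases Nat.lt_or_ge i (cnt g h N) with hlt | hge
  · obtain ⟨t, ht, _, htc⟩ := exists_isH_step g h N i hlt
    exact ⟨t, ht.le, htc⟩
  · exact ⟨N, le_rfl, by omega⟩

lemma exists_cntG (N i : ℕ) (hi : i ≤ cntG g h N) : ∃ t, t ≤ N ∧ cntG g h t = i := by
  rcases Nat.lt_or_ge i (cntG g h N) with hlt | hge
  · obtain ⟨t, ht, _, htc⟩ := exists_isG_step g h N i hlt
    exact ⟨t, ht.le, htc⟩
  · exact ⟨N, le_rfl, by omega⟩

lemma stL1_prefix {i j : ℕ} (hij : i ≤ j) : (stL g h i).1 <+: (stL g h j).1 := by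
  induction j, hij using Nat.le_induction with
  | base => exact List.prefix_refl _
  | succ j hij ih =>
    refine ih.trans ?_
    rw [stL_succ]
    split
    · exact ⟨[el g h j], rfl⟩
    · exact List.prefix_refl _

lemma stL2_suffix {i j : ℕ} (hij : i ≤ j) : (stL g h i).2 <:+ (stL g h j).2 := by
  induction j, hij using Nat.le_induction with
  | base => exact List.suffix_refl _
  | succ j hij ih =>
    refine ih.trans ?_
    rw [stL_succ]
    split
    · exact List.suffix_refl _
    · exact ⟨[el g h j], rfl⟩

lemma marg_h_le_phiI (i : ℕ) : marg h (el g h i) (Hst g h i) ≤ phiI g h i := by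
  unfold phiI; exact le_max_right _ _

lemma marg_g_le_phiI (i : ℕ) : marg g (el g h i) (Gst g h i) ≤ phiI g h i := by
  unfold phiI; exact le_max_left _ _

lemma step_bound_H (hhm : Mono h) (hhs : Submodular h) {t k : ℕ}
    (ht : t < Fintype.card α) (O : Finset α) (hO : O.card = k) :
    h O ≤ h (Hst g h t) + (∑ e ∈ O ∩ Gst g h (Fintype.card α), phiIdx g h e)
      + k * phiI g h t := by
  have hb := bound_by_margs hhm hhs O (Hst g h t)
  have hsplit : ∑ e ∈ O \ Hst g h t, marg h e (Hst g h t)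
      = ∑ e ∈ (O \ Hst g h t) ∩ Gst g h t, marg h e (Hst g h t)
      + ∑ e ∈ (O \ Hst g h t) \ Gst g h t, marg h e (Hst g h t) :=
    (Finset.sum_inter_add_sum_sdiff _ _ _).symm
  have hb1 : ∑ e ∈ (O \ Hst g h t) ∩ Gst g h t, marg h e (Hst g h t)
      ≤ ∑ e ∈ (O \ Hst g h t) ∩ Gst g h t, phiIdx g h e := by
    apply Finset.sum_le_sum
    intro e he
    obtain ⟨he1, he2⟩ := Finset.mem_inter.1 he
    have heH : e ∉ Hst g h t := (Finset.mem_sdiff.1 he1).2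
    obtain ⟨hjlt, _⟩ := mem_Gst_data g h ht.le he2
    have h1 : marg h e (Hst g h t) ≤ marg h e (Hst g h (idx g h e)) :=
      hhs (Hst_mono g h hjlt.le) e heH
    have h2 : marg h e (Hst g h (idx g h e)) ≤ phiI g h (idx g h e) := by
      have := marg_h_le_phiI g h (idx g h e)
      rwa [el_idx g h e] at this
    exact h1.trans h2
  have hb1' : ∑ e ∈ (O \ Hst g h t) ∩ Gst g h t, phiIdx g h e
      ≤ ∑ e ∈ O ∩ Gst g h (Fintype.card α), phiIdx g h e := by
    apply Finset.sum_le_sum_of_subset_of_nonneg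
    · intro e he
      obtain ⟨he1, he2⟩ := Finset.mem_inter.1 he
      exact Finset.mem_inter.2 ⟨(Finset.mem_sdiff.1 he1).1, Gst_mono g h ht.le he2⟩
    · intro e _ _
      exact phiIdx_nonneg g h hhm e
  have hb2 : ∑ e ∈ (O \ Hst g h t) \ Gst g h t, marg h e (Hst g h t)
      ≤ ((O \ Hst g h t) \ Gst g h t).card • phiI g h t := by
    apply Finset.sum_le_card_nsmul
    intro x hx
    have hx1 : x ∉ Hst g h t := (Finset.mem_sdiff.1 (Finset.mem_sdiff.1 hx).1).2
    have hx2 : x ∉ Gst g h t := (Finset.mem_sdiff.1 hx).2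
    have hxu : x ∉ Hst g h t ∪ Gst g h t := by simp [hx1, hx2]
    exact le_trans (le_max_right _ _) (greedy_le g h ht hxu)
  have hb2' : (((O \ Hst g h t) \ Gst g h t).card : ℝ) * phiI g h t ≤ k * phiI g h t := by
    apply mul_le_mul_of_nonneg_right _ (phiI_nonneg g h hhm t)
    have hsub : ((O \ Hst g h t) \ Gst g h t).card ≤ k := by
      rw [← hO]
      apply Finset.card_le_card
      intro x hx
      exact (Finset.mem_sdiff.1 (Finset.mem_sdiff.1 hx).1).1
    exact_mod_cast hsub
  rw [nsmul_eq_mul] at hb2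
  linarith

lemma step_bound_G (hgm : Mono g) (hgs : Submodular g) (hhm : Mono h) {t m : ℕ}
    (ht : t < Fintype.card α) (O : Finset α) (hO : O.card = m) :
    g O ≤ g (Gst g h t) + (∑ e ∈ O ∩ Hst g h (Fintype.card α), phiIdx g h e)
      + m * phiI g h t := by
  have hb := bound_by_margs hgm hgs O (Gst g h t)
  have hsplit : ∑ e ∈ O \ Gst g h t, marg g e (Gst g h t)
      = ∑ e ∈ (O \ Gst g h t) ∩ Hst g h t, marg g e (Gst g h t)
      + ∑ e ∈ (O \ Gst g h t) \ Hst g h t, marg g e (Gst g h t) :=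
    (Finset.sum_inter_add_sum_sdiff _ _ _).symm
  have hb1 : ∑ e ∈ (O \ Gst g h t) ∩ Hst g h t, marg g e (Gst g h t)
      ≤ ∑ e ∈ (O \ Gst g h t) ∩ Hst g h t, phiIdx g h e := by
    apply Finset.sum_le_sum
    intro e he
    obtain ⟨he1, he2⟩ := Finset.mem_inter.1 he
    have heG : e ∉ Gst g h t := (Finset.mem_sdiff.1 he1).2
    obtain ⟨hjlt, _⟩ := mem_Hst_data g h ht.le he2
    have h1 : marg g e (Gst g h t) ≤ marg g e (Gst g h (idx g h e)) :=
      hgs (Gst_mono g h hjlt.le) e heG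
    have h2 : marg g e (Gst g h (idx g h e)) ≤ phiI g h (idx g h e) := by
      have := marg_g_le_phiI g h (idx g h e)
      rwa [el_idx g h e] at this
    exact h1.trans h2
  have hb1' : ∑ e ∈ (O \ Gst g h t) ∩ Hst g h t, phiIdx g h e
      ≤ ∑ e ∈ O ∩ Hst g h (Fintype.card α), phiIdx g h e := by
    apply Finset.sum_le_sum_of_subset_of_nonneg
    · intro e he
      obtain ⟨he1, he2⟩ := Finset.mem_inter.1 he
      exact Finset.mem_inter.2 ⟨(Finset.mem_sdiff.1 he1).1, Hst_mono g h ht.le he2⟩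
    · intro e _ _
      exact phiIdx_nonneg g h hhm e
  have hb2 : ∑ e ∈ (O \ Gst g h t) \ Hst g h t, marg g e (Gst g h t)
      ≤ ((O \ Gst g h t) \ Hst g h t).card • phiI g h t := by
    apply Finset.sum_le_card_nsmul
    intro x hx
    have hx1 : x ∉ Gst g h t := (Finset.mem_sdiff.1 (Finset.mem_sdiff.1 hx).1).2
    have hx2 : x ∉ Hst g h t := (Finset.mem_sdiff.1 hx).2
    have hxu : x ∉ Hst g h t ∪ Gst g h t := by simp [hx1, hx2]
    exact le_trans (le_max_left _ _) (greedy_le g h ht hxu)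
  have hb2' : (((O \ Gst g h t) \ Hst g h t).card : ℝ) * phiI g h t ≤ m * phiI g h t := by
    apply mul_le_mul_of_nonneg_right _ (phiI_nonneg g h hhm t)
    have hsub : ((O \ Gst g h t) \ Hst g h t).card ≤ m := by
      rw [← hO]
      apply Finset.card_le_card
      intro x hx
      exact (Finset.mem_sdiff.1 (Finset.mem_sdiff.1 hx).1).1
    exact_mod_cast hsub
  rw [nsmul_eq_mul] at hb2
  linarith

lemma helper1 (hhm : Mono h) (hh0 : Nonneg h) (hhs : Submodular h)
    {k ts : ℕ} (O : Finset α) (hO : O.card = k) (hk : 1 ≤ k)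
    (hkc : k ≤ cnt g h (Fintype.card α)) (htn : ts ≤ Fintype.card α)
    (htc : cnt g h ts = k) :
    h O ≤ Real.exp 1 / (Real.exp 1 - 1) * h (Hst g h ts)
      + ∑ e ∈ O ∩ Gst g h (Fintype.card α), phiIdx g h e := by
  have hex : ∀ i : ℕ, ∃ t, (i < k → (t < Fintype.card α ∧ isH g h t ∧ cnt g h t = i))
      ∧ (i = k → t = ts) := by
    intro i
    by_cases hik : i < k
    · obtain ⟨t, h1, h2, h3⟩ := exists_isH_step g h (Fintype.card α) i (lt_of_lt_of_le hik hkc)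
      exact ⟨t, fun _ => ⟨h1, h2, h3⟩, fun he => absurd he (by omega)⟩
    · exact ⟨ts, fun hik' => absurd hik' hik, fun _ => rfl⟩
  choose τ hτ1 hτ2 using hex
  have hcnt_τ : ∀ i, i ≤ k → cnt g h (τ i) = i := by
    intro i hik
    rcases Nat.lt_or_ge i k with hlt | hge
    · exact (hτ1 i hlt).2.2
    · have : i = k := by omega
      rw [hτ2 i this, this]
      exact htc
  have hgr := greedy_rec k hk (fun i => h (Hst g h (τ i)))
      (h O - ∑ e ∈ O ∩ Gst g h (Fintype.card α), phiIdx g h e) ?_ ?_ ?_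
  · have hτk : τ k = ts := hτ2 k rfl
    rw [hτk] at hgr
    linarith
  · -- 0 ≤ v 0
    have : Hst g h (τ 0) = Hst g h 0 :=
      Hst_eq_of_cnt_eq g h (by rw [hcnt_τ 0 (by omega), cnt_zero])
    simp only [this, Hst_zero]
    exact hh0 ∅
  · exact hh0 _
  · intro i hik
    obtain ⟨htlt, hH, hc⟩ := hτ1 i hik
    have h1 : cnt g h (τ i + 1) = i + 1 := by
      rw [cnt_succ, if_pos hH, hc]
    have h2 : cnt g h (τ (i+1)) = i + 1 := hcnt_τ (i+1) hik
    have h3 : Hst g h (τ (i+1)) = Hst g h (τ i + 1) :=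
      Hst_eq_of_cnt_eq g h (by rw [h1, h2])
    have h4 : Hst g h (τ i + 1) = insert (el g h (τ i)) (Hst g h (τ i)) := by
      rw [Hst_succ, if_pos hH]
    have h5 : h (Hst g h (τ (i+1))) = h (Hst g h (τ i)) + phiI g h (τ i) := by
      rw [h3, h4, phiI_eq_of_isH g h hH, marg]
      ring
    have h6 := step_bound_H g h hhm hhs htlt O hO
    simp only [h5]
    rw [phiI_eq_of_isH g h hH] at h6 ⊢
    linarith

lemma helper2 (hgm : Mono g) (hg0 : Nonneg g) (hgs : Submodular g) (hhm : Mono h)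
    {m ss : ℕ} (O : Finset α) (hO : O.card = m) (hm : 1 ≤ m)
    (hmc : m ≤ cntG g h (Fintype.card α)) (hsn : ss ≤ Fintype.card α)
    (hsc : cntG g h ss = m) :
    g O ≤ Real.exp 1 / (Real.exp 1 - 1) * g (Gst g h ss)
      + ∑ e ∈ O ∩ Hst g h (Fintype.card α), phiIdx g h e := by
  have hex : ∀ i : ℕ, ∃ t, (i < m → (t < Fintype.card α ∧ ¬ isH g h t ∧ cntG g h t = i))
      ∧ (i = m → t = ss) := by
    intro i
    by_cases hik : i < m
    · obtain ⟨t, h1, h2, h3⟩ := exists_isG_step g h (Fintype.card α) i (lt_of_lt_of_le hik hmc)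
      exact ⟨t, fun _ => ⟨h1, h2, h3⟩, fun he => absurd he (by omega)⟩
    · exact ⟨ss, fun hik' => absurd hik' hik, fun _ => rfl⟩
  choose τ hτ1 hτ2 using hex
  have hcnt_τ : ∀ i, i ≤ m → cntG g h (τ i) = i := by
    intro i hik
    rcases Nat.lt_or_ge i m with hlt | hge
    · exact (hτ1 i hlt).2.2
    · have : i = m := by omega
      rw [hτ2 i this, this]
      exact hsc
  have hgr := greedy_rec m hm (fun i => g (Gst g h (τ i)))
      (g O - ∑ e ∈ O ∩ Hst g h (Fintype.card α), phiIdx g h e) ?_ ?_ ?_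
  · have hτk : τ m = ss := hτ2 m rfl
    rw [hτk] at hgr
    linarith
  · have : Gst g h (τ 0) = Gst g h 0 :=
      Gst_eq_of_cntG_eq g h (by rw [hcnt_τ 0 (by omega), cntG_zero])
    simp only [this, Gst_zero]
    exact hg0 ∅
  · exact hg0 _
  · intro i hik
    obtain ⟨htlt, hH, hc⟩ := hτ1 i hik
    have h1 : cntG g h (τ i + 1) = i + 1 := by
      rw [cntG_succ, if_neg hH, hc]
    have h2 : cntG g h (τ (i+1)) = i + 1 := hcnt_τ (i+1) hik
    have h3 : Gst g h (τ (i+1)) = Gst g h (τ i + 1) :=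
      Gst_eq_of_cntG_eq g h (by rw [h1, h2])
    have h4 : Gst g h (τ i + 1) = insert (el g h (τ i)) (Gst g h (τ i)) := by
      rw [Gst_succ, if_neg hH]
    have h5 : g (Gst g h (τ (i+1))) = g (Gst g h (τ i)) + phiI g h (τ i) := by
      rw [h3, h4, phiI_eq_of_not_isH g h hH, marg]
      ring
    have h6 := step_bound_G g h hgm hgs hhm htlt O hO
    simp only [h5]
    rw [phiI_eq_of_not_isH g h hH] at h6 ⊢
    linarith

lemma compl_take_drop (l : List α) (hnd : l.Nodup) (hall : ∀ x : α, x ∈ l) (k : ℕ) :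
    ((l.take k).toFinset)ᶜ = (l.drop k).toFinset := by
  have hsplit := List.take_append_drop k l
  have hnd2 : (l.take k ++ l.drop k).Nodup := by rw [hsplit]; exact hnd
  obtain ⟨-, -, hdisj⟩ := List.nodup_append.1 hnd2
  ext x
  have hx : x ∈ l.take k ∨ x ∈ l.drop k := by
    rw [← List.mem_append, hsplit]; exact hall x
  simp only [Finset.mem_compl, List.mem_toFinset]
  constructor
  · intro hnot
    tauto
  · intro hd hc
    exact hdisj x hc x hd rfl

lemma main_bound (hgm : Mono g) (hhm : Mono h) (hg0 : Nonneg g) (hh0 : Nonneg h)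
    (hgs : Submodular g) (hhs : Submodular h)
    (k : ℕ) (hk1 : 1 ≤ k) (hkn : k ≤ Fintype.card α) (S : Finset α) (hS : S.card = k) :
    (1 + Real.exp 1 / (Real.exp 1 - 1)) * fObj g h
      ((((stL g h (Fintype.card α)).1 ++ (stL g h (Fintype.card α)).2).take k).toFinset)
      ≥ fObj g h S := by
  have hE : (1:ℝ) < Real.exp 1 := by
    have := Real.add_one_le_exp (1:ℝ); linarith
  have hr1 : (1:ℝ) ≤ Real.exp 1 / (Real.exp 1 - 1) := by
    rw [le_div_iff₀ (by linarith)]; linarith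
  have hab : (stL g h (Fintype.card α)).1.length + (stL g h (Fintype.card α)).2.length
      = Fintype.card α := len_stL g h le_rfl
  have hnd : ((stL g h (Fintype.card α)).1 ++ (stL g h (Fintype.card α)).2).Nodup :=
    nodup_stL g h le_rfl
  have hall : ∀ x : α, x ∈ (stL g h (Fintype.card α)).1 ++ (stL g h (Fintype.card α)).2 := by
    intro x
    rw [← List.mem_toFinset, List.toFinset_append,
      toFinset_stL1 g h le_rfl, toFinset_stL2 g h le_rfl, HG_univ]
    exact Finset.mem_univ x
  have hTQ := compl_take_drop ((stL g h (Fintype.card α)).1 ++ (stL g h (Fintype.card α)).2)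
    hnd hall k
  have hcnt_n : cnt g h (Fintype.card α) = (stL g h (Fintype.card α)).1.length := rfl
  have hcntG_n : cntG g h (Fintype.card α) = (stL g h (Fintype.card α)).2.length := rfl
  simp only [fObj, ge_iff_le]
  rw [hTQ]
  by_cases hka : k ≤ (stL g h (Fintype.card α)).1.length
  · -- Case A : the prefix is contained in the H-part
    obtain ⟨ts, htsn, htsc⟩ := exists_cnt g h (Fintype.card α) k (by omega)
    have hts_len : (stL g h ts).1.length = k := htsc
    have hts_list : (stL g h ts).1 = (stL g h (Fintype.card α)).1.take k := by
      have hpre : (stL g h ts).1 <+: (stL g h (Fintype.card α)).1 := stL1_prefix g h htsn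
      have h1 := List.prefix_iff_eq_take.1 hpre
      rwa [hts_len] at h1
    have htake : ((stL g h (Fintype.card α)).1 ++ (stL g h (Fintype.card α)).2).take k
        = (stL g h ts).1 := by
      rw [List.take_append_of_le_length hka]; exact hts_list.symm
    have hTeq : (((stL g h (Fintype.card α)).1 ++ (stL g h (Fintype.card α)).2).take k).toFinset
        = Hst g h ts := by
      rw [htake]; exact toFinset_stL1 g h htsn
    have hdrop : ((stL g h (Fintype.card α)).1 ++ (stL g h (Fintype.card α)).2).drop k
        = (stL g h (Fintype.card α)).1.drop k ++ (stL g h (Fintype.card α)).2 :=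
      List.drop_append_of_le_length hka
    have hQsup : Gst g h (Fintype.card α) ⊆
        ((((stL g h (Fintype.card α)).1 ++ (stL g h (Fintype.card α)).2).drop k).toFinset) := by
      intro x hx
      rw [List.mem_toFinset, hdrop, List.mem_append]
      right
      rw [← List.mem_toFinset, toFinset_stL2 g h le_rfl]
      exact hx
    set Q := ((((stL g h (Fintype.card α)).1 ++ (stL g h (Fintype.card α)).2).drop k).toFinset)
      with hQdef
    rw [hTeq]
    -- bound on h S
    have hhb := helper1 g h hhm hh0 hhs S hS hk1 (by omega) htsn htsc
    -- the cross-term is at most g Q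
    have hXle : ∑ e ∈ S ∩ Gst g h (Fintype.card α), phiIdx g h e ≤ g Q := by
      have h1 : ∑ e ∈ S ∩ Gst g h (Fintype.card α), phiIdx g h e
          ≤ ∑ e ∈ Gst g h (Fintype.card α), phiIdx g h e :=
        Finset.sum_le_sum_of_subset_of_nonneg Finset.inter_subset_right
          (fun e _ _ => phiIdx_nonneg g h hhm e)
      rw [sum_phi_Gst g h (Fintype.card α) le_rfl] at h1
      have h2 : g (Gst g h (Fintype.card α)) ≤ g Q := hgm hQsup
      have h3 := hg0 (∅ : Finset α)
      linarith
    -- bound on g Sᶜ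
    have hgb : g Sᶜ ≤ g Q + h (Hst g h ts) := by
      have hb := bound_by_margs hgm hgs Sᶜ Q
      have hmemT : ∀ e ∈ Sᶜ \ Q, e ∈ Hst g h ts := by
        intro e he
        have heQ : e ∉ Q := (Finset.mem_sdiff.1 he).2
        rw [← hTeq]
        by_contra hc
        exact heQ (hTQ ▸ Finset.mem_compl.2 hc)
      have hsum : ∑ e ∈ Sᶜ \ Q, marg g e Q ≤ ∑ e ∈ Sᶜ \ Q, phiIdx g h e := by
        apply Finset.sum_le_sum
        intro e he
        have heQ : e ∉ Q := (Finset.mem_sdiff.1 he).2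
        have heT := hmemT e he
        obtain ⟨hjlt, _⟩ := mem_Hst_data g h htsn heT
        have h1 : marg g e Q ≤ marg g e (Gst g h (idx g h e)) := by
          refine hgs ?_ e heQ
          exact (Gst_mono g h (le_of_lt (idx_lt g h e))).trans hQsup
        have h2 : marg g e (Gst g h (idx g h e)) ≤ phiI g h (idx g h e) := by
          have := marg_g_le_phiI g h (idx g h e)
          rwa [el_idx g h e] at this
        exact h1.trans h2
      have hsum2 : ∑ e ∈ Sᶜ \ Q, phiIdx g h e ≤ ∑ e ∈ Hst g h ts, phiIdx g h e :=
        Finset.sum_le_sum_of_subset_of_nonneg hmemT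
          (fun e _ _ => phiIdx_nonneg g h hhm e)
      rw [sum_phi_Hst g h ts htsn] at hsum2
      have h3 := hh0 (∅ : Finset α)
      linarith
    have h1 : 0 ≤ g Q := hg0 Q
    have h2 : 0 ≤ h (Hst g h ts) := hh0 _
    nlinarith [mul_nonneg (sub_nonneg.2 hr1) h1]
  · -- Case B : the prefix contains all of the H-part
    push_neg at hka
    have hka' : (stL g h (Fintype.card α)).1.length ≤ k := hka.le
    have htake : ((stL g h (Fintype.card α)).1 ++ (stL g h (Fintype.card α)).2).take k
        = (stL g h (Fintype.card α)).1
          ++ (stL g h (Fintype.card α)).2.take (k - (stL g h (Fintype.card α)).1.length) := by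
      conv_lhs =>
        rw [show k = (stL g h (Fintype.card α)).1.length
          + (k - (stL g h (Fintype.card α)).1.length) from by omega]
      exact List.take_length_add_append _
    have hdrop : ((stL g h (Fintype.card α)).1 ++ (stL g h (Fintype.card α)).2).drop k
        = (stL g h (Fintype.card α)).2.drop (k - (stL g h (Fintype.card α)).1.length) := by
      conv_lhs =>
        rw [show k = (stL g h (Fintype.card α)).1.length
          + (k - (stL g h (Fintype.card α)).1.length) from by omega]
      exact List.drop_length_add_append _
    have hTsup : Hst g h (Fintype.card α) ⊆
        ((((stL g h (Fintype.card α)).1 ++ (stL g h (Fintype.card α)).2).take k).toFinset) := by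
      intro x hx
      rw [List.mem_toFinset, htake, List.mem_append]
      left
      rw [← List.mem_toFinset, toFinset_stL1 g h le_rfl]
      exact hx
    obtain ⟨ss, hssn, hssc⟩ := exists_cntG g h (Fintype.card α) (Fintype.card α - k) (by omega)
    have hss_len : (stL g h ss).2.length = Fintype.card α - k := hssc
    have hss_list : (stL g h ss).2
        = (stL g h (Fintype.card α)).2.drop (k - (stL g h (Fintype.card α)).1.length) := by
      have hsuf : (stL g h ss).2 <:+ (stL g h (Fintype.card α)).2 := stL2_suffix g h hssn
      have h1 := List.suffix_iff_eq_drop.1 hsuf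
      rw [hss_len] at h1
      rwa [show (stL g h (Fintype.card α)).2.length - (Fintype.card α - k)
        = k - (stL g h (Fintype.card α)).1.length from by omega] at h1
    have hQeq : ((((stL g h (Fintype.card α)).1 ++ (stL g h (Fintype.card α)).2).drop k).toFinset)
        = Gst g h ss := by
      rw [hdrop, ← hss_list]
      exact toFinset_stL2 g h hssn
    set T := ((((stL g h (Fintype.card α)).1 ++ (stL g h (Fintype.card α)).2).take k).toFinset)
      with hTdef
    rw [hQeq]
    -- bound on h S
    have hhb : h S ≤ h T + g (Gst g h ss) := by
      have hb := bound_by_margs hhm hhs S T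
      have hmemQ : ∀ e ∈ S \ T, e ∈ Gst g h ss := by
        intro e he
        have heT : e ∉ T := (Finset.mem_sdiff.1 he).2
        rw [← hQeq, ← hTQ]
        exact Finset.mem_compl.2 heT
      have hsum : ∑ e ∈ S \ T, marg h e T ≤ ∑ e ∈ S \ T, phiIdx g h e := by
        apply Finset.sum_le_sum
        intro e he
        have heT : e ∉ T := (Finset.mem_sdiff.1 he).2
        have heQ := hmemQ e he
        obtain ⟨hjlt, _⟩ := mem_Gst_data g h hssn heQ
        have h1 : marg h e T ≤ marg h e (Hst g h (idx g h e)) := by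
          refine hhs ?_ e heT
          exact (Hst_mono g h (le_of_lt (idx_lt g h e))).trans hTsup
        have h2 : marg h e (Hst g h (idx g h e)) ≤ phiI g h (idx g h e) := by
          have := marg_h_le_phiI g h (idx g h e)
          rwa [el_idx g h e] at this
        exact h1.trans h2
      have hsum2 : ∑ e ∈ S \ T, phiIdx g h e ≤ ∑ e ∈ Gst g h ss, phiIdx g h e :=
        Finset.sum_le_sum_of_subset_of_nonneg hmemQ
          (fun e _ _ => phiIdx_nonneg g h hhm e)
      rw [sum_phi_Gst g h ss hssn] at hsum2
      have h3 := hg0 (∅ : Finset α)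
      linarith
    have h1 : 0 ≤ g (Gst g h ss) := hg0 _
    have h2 : 0 ≤ h T := hh0 _
    by_cases hm0 : Fintype.card α - k = 0
    · -- k = n , so Sᶜ = ∅
      have hSc : Sᶜ = ∅ := by
        rw [← Finset.card_eq_zero, Finset.card_compl, hS]
        omega
      have hgb : g Sᶜ ≤ g (Gst g h ss) := by
        rw [hSc]
        exact hgm (Finset.empty_subset _)
      nlinarith [mul_nonneg (sub_nonneg.2 hr1) h2, mul_nonneg (sub_nonneg.2 hr1) h1]
    · have hm1 : 1 ≤ Fintype.card α - k := by omega
      have hScard : Sᶜ.card = Fintype.card α - k := by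
        rw [Finset.card_compl, hS]
      have hgb' := helper2 g h hgm hg0 hgs hhm Sᶜ hScard hm1 (by omega) hssn hssc
      have hYle : ∑ e ∈ Sᶜ ∩ Hst g h (Fintype.card α), phiIdx g h e ≤ h T := by
        have hy1 : ∑ e ∈ Sᶜ ∩ Hst g h (Fintype.card α), phiIdx g h e
            ≤ ∑ e ∈ Hst g h (Fintype.card α), phiIdx g h e :=
          Finset.sum_le_sum_of_subset_of_nonneg Finset.inter_subset_right
            (fun e _ _ => phiIdx_nonneg g h hhm e)
        rw [sum_phi_Hst g h (Fintype.card α) le_rfl] at hy1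
        have hy2 : h (Hst g h (Fintype.card α)) ≤ h T := hhm hTsup
        have hy3 := hh0 (∅ : Finset α)
        linarith
      nlinarith [mul_nonneg (sub_nonneg.2 hr1) h2]

end Constr

theorem stmt1 (g h : Finset α → ℝ)
    (hgm : Mono g) (hhm : Mono h) (hg0 : Nonneg g) (hh0 : Nonneg h)
    (hgs : Submodular g) (hhs : Submodular h) :
    ∃ π : List α, π.Nodup ∧ (∀ x : α, x ∈ π) ∧
      ∀ k : ℕ, 1 ≤ k → k ≤ Fintype.card α → ∀ S : Finset α, S.card = k →
        (1 + Real.exp 1 / (Real.exp 1 - 1)) * fObj g h (π.take k).toFinset ≥ fObj g h S := by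
  rcases isEmpty_or_nonempty α with hemp | hne
  · refine ⟨[], List.nodup_nil, fun x => (hemp.false x).elim, ?_⟩
    intro k hk1 hkn S hS
    haveI := hemp
    have h0 : Fintype.card α = 0 := Fintype.card_eq_zero
    omega
  · haveI := hne
    refine ⟨(stL g h (Fintype.card α)).1 ++ (stL g h (Fintype.card α)).2,
      nodup_stL g h le_rfl, ?_, ?_⟩
    · intro x
      rw [← List.mem_toFinset, List.toFinset_append,
        toFinset_stL1 g h le_rfl, toFinset_stL2 g h le_rfl, HG_univ]
      exact Finset.mem_univ x
    · intro k hk1 hkn S hS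
      exact main_bound g h hgm hhm hg0 hh0 hgs hhs k hk1 hkn S hS

end IncDec
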